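/- Let w_u > 0 and c_u > 0 for each nonempty subset u of {1,…,s}, let λ ∈ (0,1], and consider C(γ) = (∑_u γ_u^λ w_u)^{1/λ} · (∑_u c_u²/γ_u) as a function of positive weights (γ_u). Then C(γ) is minimized by the choice γ_u = (c_u / √(w_u))^{2/(1+λ)}. -/

import Mathlib

/-- Weight-optimization lemma: for positive `w_u`, `c_u` indexed by the nonempty
subsets `u ⊆ {1,…,s}` and `λ ∈ (0,1]`, the quantity
`C(γ) = (∑_u γ_u^λ w_u)^{1/λ} · (∑_u c_u²/γ_u)` over positive weights `γ` is
minimized by `γ_u = (c_u/√(w_u))^{2/(1+λ)}`. -/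
theorem cbc_weight_optimization (s : ℕ)
    (w c : Finset (Fin s) → ℝ)
    (hw : ∀ u : Finset (Fin s), u ≠ ∅ → 0 < w u)
    (hc : ∀ u : Finset (Fin s), u ≠ ∅ → 0 < c u)
    (lam : ℝ) (hlam0 : 0 < lam) (hlam1 : lam ≤ 1)
    (γstar : Finset (Fin s) → ℝ)
    (hγstar : ∀ u : Finset (Fin s),
      γstar u = (c u / Real.sqrt (w u)) ^ ((2 : ℝ) / (1 + lam))) :
    ∀ γ : Finset (Fin s) → ℝ, (∀ u : Finset (Fin s), u ≠ ∅ → 0 < γ u) →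
      (∑ u ∈ Finset.univ.filter (fun u : Finset (Fin s) => u ≠ ∅),
          γstar u ^ lam * w u) ^ (1 / lam) *
        (∑ u ∈ Finset.univ.filter (fun u : Finset (Fin s) => u ≠ ∅),
          c u ^ 2 / γstar u)
      ≤ (∑ u ∈ Finset.univ.filter (fun u : Finset (Fin s) => u ≠ ∅),
          γ u ^ lam * w u) ^ (1 / lam) *
        (∑ u ∈ Finset.univ.filter (fun u : Finset (Fin s) => u ≠ ∅),
          c u ^ 2 / γ u) := by
  intro γ hγ
  have h1l : (0:ℝ) < 1 + lam := by linarith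
  set T : Finset (Finset (Fin s)) :=
    Finset.univ.filter (fun u : Finset (Fin s) => u ≠ ∅) with hT
  have hmemT : ∀ u ∈ T, u ≠ ∅ := by
    intro u hu
    exact (Finset.mem_filter.mp hu).2
  -- positivity of γstar
  have hγs : ∀ u : Finset (Fin s), u ≠ ∅ → 0 < γstar u := by
    intro u hu
    rw [hγstar u]
    exact Real.rpow_pos_of_pos
      (div_pos (hc u hu) (Real.sqrt_pos.mpr (hw u hu))) _
  -- γstar ^ (1+lam) = c^2 / w
  have hkey : ∀ u : Finset (Fin s), u ≠ ∅ →
      γstar u ^ (1 + lam) = c u ^ 2 / w u := by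
    intro u hu
    have hx : (0:ℝ) < c u / Real.sqrt (w u) :=
      div_pos (hc u hu) (Real.sqrt_pos.mpr (hw u hu))
    rw [hγstar u, ← Real.rpow_mul hx.le, div_mul_cancel₀ _ h1l.ne',
      show ((2:ℝ)) = ((2:ℕ):ℝ) by norm_num, Real.rpow_natCast, div_pow,
      Real.sq_sqrt (hw u hu).le]
  -- γstar ^ lam * w = c^2 / γstar
  have he1 : ∀ u : Finset (Fin s), u ≠ ∅ →
      γstar u ^ lam * w u = c u ^ 2 / γstar u := by
    intro u hu
    have hg := hγs u hu
    rw [eq_div_iff hg.ne']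
    have h2 : γstar u ^ lam * γstar u = γstar u ^ (1 + lam) := by
      rw [add_comm, Real.rpow_add hg, Real.rpow_one]
    calc γstar u ^ lam * w u * γstar u = γstar u ^ lam * γstar u * w u := by ring
      _ = (c u ^ 2 / w u) * w u := by rw [h2, hkey u hu]
      _ = c u ^ 2 := div_mul_cancel₀ _ (hw u hu).ne'
  -- the γ-independent middle term
  have he2 : ∀ u : Finset (Fin s), u ≠ ∅ → ∀ x : ℝ, 0 < x →
      (x ^ lam * w u) ^ ((1:ℝ) / (1 + lam)) * (c u ^ 2 / x) ^ (lam / (1 + lam))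
        = (w u) ^ ((1:ℝ) / (1 + lam)) * (c u ^ 2) ^ (lam / (1 + lam)) := by
    intro u hu x hx
    have hcw : (0:ℝ) ≤ c u ^ 2 := by positivity
    rw [Real.mul_rpow (Real.rpow_nonneg hx.le _) (hw u hu).le,
      Real.div_rpow hcw hx.le, ← Real.rpow_mul hx.le,
      mul_one_div]
    have hxp : (0:ℝ) < x ^ (lam / (1 + lam)) := Real.rpow_pos_of_pos hx _
    field_simp
  -- he2 at γstar gives: c^2/γstar equals the γ-independent term
  have he3 : ∀ u : Finset (Fin s), u ≠ ∅ →
      c u ^ 2 / γstar u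
        = (w u) ^ ((1:ℝ) / (1 + lam)) * (c u ^ 2) ^ (lam / (1 + lam)) := by
    intro u hu
    have hg := hγs u hu
    have hd : 0 < c u ^ 2 / γstar u := div_pos (pow_pos (hc u hu) 2) hg
    have := he2 u hu (γstar u) hg
    rw [he1 u hu] at this
    rw [← this, ← Real.rpow_add hd]
    rw [show (1:ℝ) / (1 + lam) + lam / (1 + lam) = 1 by field_simp,
      Real.rpow_one]
  -- notation for sums
  set D : ℝ := ∑ u ∈ T, c u ^ 2 / γstar u with hD
  set A : ℝ := ∑ u ∈ T, γ u ^ lam * w u with hA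
  set B : ℝ := ∑ u ∈ T, c u ^ 2 / γ u with hB
  have hAeq : (∑ u ∈ T, γstar u ^ lam * w u) = D := by
    apply Finset.sum_congr rfl
    intro u hu
    exact he1 u (hmemT u hu)
  rw [hAeq]
  -- trivial case: no nonempty subsets
  rcases T.eq_empty_or_nonempty with hTe | hTne
  · simp [hD, hA, hB, hTe]
  have hD0 : 0 < D := by
    apply Finset.sum_pos _ hTne
    intro u hu
    exact div_pos (pow_pos (hc u (hmemT u hu)) 2) (hγs u (hmemT u hu))
  have hA0 : 0 < A := by
    apply Finset.sum_pos _ hTne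
    intro u hu
    exact mul_pos (Real.rpow_pos_of_pos (hγ u (hmemT u hu)) _) (hw u (hmemT u hu))
  have hB0 : 0 < B := by
    apply Finset.sum_pos _ hTne
    intro u hu
    exact div_pos (pow_pos (hc u (hmemT u hu)) 2) (hγ u (hmemT u hu))
  -- Hölder's inequality
  have hpq : Real.HolderConjugate (1 + lam) ((1 + lam) / lam) := by
    constructor
    · rw [inv_div, inv_one]
      field_simp
    · linarith
    · positivity
  have holder : D ≤ A ^ ((1:ℝ) / (1 + lam)) * B ^ (lam / (1 + lam)) := by
    have h := Real.inner_le_Lp_mul_Lq_of_nonneg T hpq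
      (f := fun u => (γ u ^ lam * w u) ^ ((1:ℝ) / (1 + lam)))
      (g := fun u => (c u ^ 2 / γ u) ^ (lam / (1 + lam)))
      (fun u hu => Real.rpow_nonneg
        (mul_nonneg (Real.rpow_nonneg (hγ u (hmemT u hu)).le _) (hw u (hmemT u hu)).le) _)
      (fun u hu => Real.rpow_nonneg
        (div_nonneg (pow_nonneg (hc u (hmemT u hu)).le 2) (hγ u (hmemT u hu)).le) _)
    have hfp : ∀ u ∈ T, ((γ u ^ lam * w u) ^ ((1:ℝ) / (1 + lam))) ^ (1 + lam)
        = γ u ^ lam * w u := by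
      intro u hu
      rw [← Real.rpow_mul
        (mul_nonneg (Real.rpow_nonneg (hγ u (hmemT u hu)).le _) (hw u (hmemT u hu)).le), one_div,
        inv_mul_cancel₀ h1l.ne', Real.rpow_one]
    have hgq : ∀ u ∈ T, ((c u ^ 2 / γ u) ^ (lam / (1 + lam))) ^ ((1 + lam) / lam)
        = c u ^ 2 / γ u := by
      intro u hu
      rw [← Real.rpow_mul
        (div_nonneg (pow_nonneg (hc u (hmemT u hu)).le 2) (hγ u (hmemT u hu)).le)]
      rw [show lam / (1 + lam) * ((1 + lam) / lam) = 1 by field_simp, Real.rpow_one]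
    rw [Finset.sum_congr rfl hfp, Finset.sum_congr rfl hgq] at h
    have hDe : D = ∑ u ∈ T,
        (γ u ^ lam * w u) ^ ((1:ℝ) / (1 + lam)) * (c u ^ 2 / γ u) ^ (lam / (1 + lam)) := by
      apply Finset.sum_congr rfl
      intro u hu
      rw [he3 u (hmemT u hu), he2 u (hmemT u hu) (γ u) (hγ u (hmemT u hu))]
    rw [show (1:ℝ) / ((1 + lam) / lam) = lam / (1 + lam) by rw [one_div, inv_div]] at h
    rw [hDe]
    exact h
  -- conclude by raising to the power 1/lam + 1
  have ht0 : (0:ℝ) ≤ 1 / lam + 1 := by positivity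
  have hstep : D ^ ((1:ℝ) / lam + 1)
      ≤ (A ^ ((1:ℝ) / (1 + lam)) * B ^ (lam / (1 + lam))) ^ ((1:ℝ) / lam + 1) :=
    Real.rpow_le_rpow hD0.le holder ht0
  calc D ^ ((1:ℝ) / lam) * D = D ^ ((1:ℝ) / lam + 1) := by
        rw [Real.rpow_add hD0, Real.rpow_one]
    _ ≤ (A ^ ((1:ℝ) / (1 + lam)) * B ^ (lam / (1 + lam))) ^ ((1:ℝ) / lam + 1) := hstep
    _ = A ^ ((1:ℝ) / lam) * B := by
        rw [Real.mul_rpow (Real.rpow_nonneg hA0.le _) (Real.rpow_nonneg hB0.le _),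
          ← Real.rpow_mul hA0.le, ← Real.rpow_mul hB0.le,
          show (1:ℝ) / (1 + lam) * (1 / lam + 1) = 1 / lam by field_simp,
          show lam / (1 + lam) * (1 / lam + 1) = 1 by field_simp,
          Real.rpow_one]
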